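/- Let c > 0 be a real number with c < 1, and let d be a real number satisfying 2(1−c)ln(1−c) + 2c·ln(c) + c²d ≥ 0. Then in the binomial random bipartite graph G(N, N, d/N), asymptotically almost surely every pair of sets S, T with S in one color class, T in the other, and |S| = |T| = cN, satisfies e(S,T) ≥ 1. -/

import Mathlib

open MeasureTheory

/-- The binomial random bipartite graph `G(N, N, p)`: each pair in `Fin N × Fin N` (left vertex,
right vertex) is an edge independently with probability `p` (truncated at `1`). A sample is the
indicator function of the edge set. -/
noncomputable def randomBipartite (N : ℕ) (p : ℝ) : Measure (Fin N × Fin N → Bool) :=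
  Measure.pi fun _ =>
    (PMF.bernoulli (min (Real.toNNReal p) 1) (min_le_right _ _)).toMeasure

namespace Stmt12Aux
open Real Filter MeasureTheory


noncomputable def phi (n : ℕ) : ℝ := Real.sqrt (2*n) * Real.exp (n * Real.log n - n)

lemma phi_pos {n : ℕ} (hn : 1 ≤ n) : 0 < phi n := by
  unfold phi
  have h : (0:ℝ) < n := by exact_mod_cast hn
  positivity

lemma phi_eq {n : ℕ} (hn : 1 ≤ n) :
    phi n = Real.sqrt (2*n) * ((n:ℝ) / Real.exp 1) ^ n := by
  unfold phi
  congr 1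
  have hn0 : (0:ℝ) < n := by exact_mod_cast hn
  have h1 : (0:ℝ) < (n:ℝ) / Real.exp 1 := by positivity
  rw [← Real.exp_log (pow_pos h1 n), Real.log_pow, Real.log_div (ne_of_gt hn0) (Real.exp_ne_zero 1),
    Real.log_exp]
  ring_nf

lemma sqrt_pi_le_stirling {n : ℕ} (hn : 1 ≤ n) : Real.sqrt π ≤ Stirling.stirlingSeq n := by
  obtain ⟨m, rfl⟩ := Nat.exists_eq_add_of_le hn
  have ht : Tendsto (Stirling.stirlingSeq ∘ Nat.succ) atTop (nhds (Real.sqrt π)) :=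
    Stirling.tendsto_stirlingSeq_sqrt_pi.comp (tendsto_add_atTop_nat 1)
  simpa [Nat.succ_eq_add_one, Nat.add_comm] using
    Stirling.stirlingSeq'_antitone.le_of_tendsto ht m

lemma stirling_le {n : ℕ} (hn : 1 ≤ n) : Stirling.stirlingSeq n ≤ Real.exp 1 / Real.sqrt 2 := by
  obtain ⟨m, rfl⟩ := Nat.exists_eq_add_of_le hn
  have := Stirling.stirlingSeq'_antitone (Nat.zero_le m)
  simpa [Nat.succ_eq_add_one, Nat.add_comm] using this

lemma fact_ge {n : ℕ} (hn : 1 ≤ n) : Real.sqrt π * phi n ≤ n.factorial := by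
  have h := sqrt_pi_le_stirling hn
  rw [Stirling.stirlingSeq, ← phi_eq hn] at h
  have hp := phi_pos hn
  calc Real.sqrt π * phi n ≤ (n.factorial / phi n) * phi n := by
        apply mul_le_mul_of_nonneg_right h hp.le
    _ = n.factorial := by field_simp

lemma fact_le {n : ℕ} (hn : 1 ≤ n) : (n.factorial : ℝ) ≤ (Real.exp 1 / Real.sqrt 2) * phi n := by
  have h := stirling_le hn
  rw [Stirling.stirlingSeq, ← phi_eq hn] at h
  have hp := phi_pos hn
  calc (n.factorial:ℝ) = (n.factorial / phi n) * phi n := by field_simp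
    _ ≤ (Real.exp 1 / Real.sqrt 2) * phi n := mul_le_mul_of_nonneg_right h hp.le

-- replace phi_def axiom usage: choose_le uses phi_def; define it
lemma phi_def (n : ℕ) : phi n = Real.sqrt (2*n) * Real.exp (n * Real.log n - n) := rfl

lemma choose_le {k s : ℕ} (hk : 1 ≤ k) (hs : 1 ≤ s) :
    ((k+s).choose k : ℝ) ≤ (Real.exp 1 / (2*π)) * (Real.sqrt (k+s) / (Real.sqrt k * Real.sqrt s))
      * Real.exp ((k+s) * Real.log (k+s) - k * Real.log k - s * Real.log s) := by
  have hks : 1 ≤ k + s := le_trans hk (Nat.le_add_right k s)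
  have hpk := phi_pos hk
  have hps := phi_pos hs
  have hπ := Real.pi_pos
  -- choose = (k+s)!/(k! s!)
  have hfact : ((k+s).choose k : ℝ) * (k.factorial * s.factorial) = (k+s).factorial := by
    have := Nat.choose_mul_factorial_mul_factorial (Nat.le_add_right k s)
    rw [Nat.add_sub_cancel_left] at this
    exact_mod_cast by rw [← this]; push_cast; ring
  have hkf : (0:ℝ) < k.factorial := by positivity
  have hsf : (0:ℝ) < s.factorial := by positivity
  have step1 : ((k+s).choose k : ℝ) ≤ ((Real.exp 1 / Real.sqrt 2) * phi (k+s)) /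
      ((Real.sqrt π * phi k) * (Real.sqrt π * phi s)) := by
    have h1 : ((k+s).choose k : ℝ) = (k+s).factorial / (k.factorial * s.factorial) := by
      field_simp [← hfact]
      linear_combination hfact
    rw [h1]
    apply div_le_div₀ (mul_nonneg (by positivity) (phi_pos hks).le) (fact_le hks) (by positivity)
    exact mul_le_mul (fact_ge hk) (fact_ge hs) (by positivity) (by positivity)
  refine step1.trans (le_of_eq ?_)
  rw [phi_def, phi_def, phi_def]
  have e1 : Real.sqrt (2*((k:ℝ)+s)) = Real.sqrt 2 * Real.sqrt ((k:ℝ)+s) := by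
    rw [← Real.sqrt_mul (by norm_num)]
  have e2 : Real.sqrt (2*(k:ℝ)) = Real.sqrt 2 * Real.sqrt (k:ℝ) := by
    rw [← Real.sqrt_mul (by norm_num)]
  have e3 : Real.sqrt (2*(s:ℝ)) = Real.sqrt 2 * Real.sqrt (s:ℝ) := by
    rw [← Real.sqrt_mul (by norm_num)]
  have hsq2 : (0:ℝ) < Real.sqrt 2 := by positivity
  have hsqπ : Real.sqrt π * Real.sqrt π = π := Real.mul_self_sqrt hπ.le
  have hk0 : (0:ℝ) < k := by exact_mod_cast hk
  have hs0 : (0:ℝ) < s := by exact_mod_cast hs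
  have hsk : (0:ℝ) < Real.sqrt k := Real.sqrt_pos.2 hk0
  have hss : (0:ℝ) < Real.sqrt s := Real.sqrt_pos.2 hs0
  have hexp : Real.exp (((k:ℝ)+s) * Real.log ((k:ℝ)+s) - ((k:ℝ)+s)) =
      Real.exp (((k:ℝ)+s) * Real.log ((k:ℝ)+s) - k * Real.log k - s * Real.log s) *
      (Real.exp ((k:ℝ) * Real.log k - k) * Real.exp ((s:ℝ) * Real.log s - s)) := by
    rw [← Real.exp_add, ← Real.exp_add]; ring_nf
  push_cast
  push_cast at e1 e2 e3
  rw [e1, e2, e3, hexp]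
  have he1 : (0:ℝ) < Real.exp ((k:ℝ) * Real.log k - k) := Real.exp_pos _
  have he2 : (0:ℝ) < Real.exp ((s:ℝ) * Real.log s - s) := Real.exp_pos _
  field_simp
  ring_nf
  have hπ2 : (Real.sqrt π)^2 = π := Real.sq_sqrt hπ.le
  have h23 : (Real.sqrt 2)^3 = 2 * Real.sqrt 2 := by
    rw [pow_succ, Real.sq_sqrt (by norm_num : (0:ℝ) ≤ 2)]
  rw [hπ2, Real.sq_sqrt (by norm_num : (0:ℝ) ≤ 2)]
  ring

set_option maxHeartbeats 1000000 in

lemma entropy_bound {c d N kk ss : ℝ} (hc : 0 < c) (hc1 : c < 1)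
    (hd : 2 * (1 - c) * Real.log (1 - c) + 2 * c * Real.log c + c ^ 2 * d ≥ 0)
    (hd0 : 0 ≤ d) (hN : 0 < N)
    (hk1 : c*N - 1 ≤ kk) (hk2 : kk ≤ c*N) (hks : kk + ss = N) (hcN : 2 ≤ c*N) :
    2*(N*Real.log N - kk*Real.log kk - ss*Real.log ss) - d*kk^2/N
      ≤ 4 - 2*Real.log (1-c) + 2*d*c := by
  have hc1' : 0 < 1 - c := by linarith
  have hkpos : 0 < kk := by linarith
  have hsslb : (1-c)*N ≤ ss := by nlinarith
  have hssub : ss ≤ (1-c)*N + 1 := by nlinarith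
  have hsspos : 0 < ss := by nlinarith
  have hlogc : Real.log c < 0 := Real.log_neg hc hc1
  have hlogc1 : Real.log (1-c) < 0 := Real.log_neg hc1' (by linarith)
  -- identity
  have hid : N*Real.log N - kk*Real.log kk - ss*Real.log ss
      = -kk*Real.log (kk/N) - ss*Real.log (ss/N) := by
    rw [Real.log_div (ne_of_gt hkpos) (ne_of_gt hN), Real.log_div (ne_of_gt hsspos) (ne_of_gt hN)]
    linear_combination (-Real.log N) * hks
  -- step (i)
  have hinv : 1/N ≤ c/2 := by rw [div_le_div_iff₀ hN (by norm_num)]; linarith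
  have hcN1 : 0 < c - 1/N := by linarith
  have hlog1 : Real.log c - Real.log (c - 1/N) ≤ 2/(c*N) := by
    have h1 : Real.log (c / (c - 1/N)) ≤ c/(c-1/N) - 1 :=
      Real.log_le_sub_one_of_pos (by positivity)
    rw [Real.log_div (ne_of_gt hc) (ne_of_gt hcN1)] at h1
    have h2 : c/(c-1/N) - 1 = (1/N)/(c-1/N) := by
      rw [div_sub_one (ne_of_gt hcN1)]; congr 1; ring
    have h3 : (1/N)/(c-1/N) ≤ 2/(c*N) := by
      rw [div_le_div_iff₀ hcN1 (by positivity)]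
      have e : (1/N)*(c*N) = c := by field_simp
      rw [e]; linarith
    linarith
  have hkN : c - 1/N ≤ kk/N := by
    rw [le_div_iff₀ hN]
    have e : (c - 1/N)*N = c*N - 1 := by field_simp
    rw [e]; linarith
  have hstep1 : -kk*Real.log (kk/N) ≤ -(c*N)*Real.log c + 2 := by
    have h4 : Real.log (c - 1/N) ≤ Real.log (kk/N) :=
      Real.log_le_log (by positivity) hkN
    have h5 : Real.log c - 2/(c*N) ≤ Real.log (kk/N) := by linarith
    have h6 : kk * (Real.log c - 2/(c*N)) ≤ kk * Real.log (kk/N) :=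
      mul_le_mul_of_nonneg_left h5 hkpos.le
    have h7 : c*N*Real.log c ≤ kk*Real.log c := by nlinarith
    have h8 : kk * (2/(c*N)) ≤ 2 := by
      have h81 : kk * (2/(c*N)) ≤ (c*N) * (2/(c*N)) :=
        mul_le_mul_of_nonneg_right hk2 (by positivity)
      have e : (c*N)*(2/(c*N)) = 2 := by field_simp
      linarith [e ▸ h81]
    nlinarith [h6, h7, h8, mul_div_assoc kk 2 (c*N)]
  -- step (ii)
  have hstep2 : -ss*Real.log (ss/N) ≤ -((1-c)*N)*Real.log (1-c) - Real.log (1-c) := by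
    have h4 : Real.log (1-c) ≤ Real.log (ss/N) := by
      apply Real.log_le_log hc1'
      rw [le_div_iff₀ hN]; nlinarith
    have h5 : ss * Real.log (1-c) ≤ ss * Real.log (ss/N) :=
      mul_le_mul_of_nonneg_left h4 hsspos.le
    have h6 : ((1-c)*N + 1) * Real.log (1-c) ≤ ss * Real.log (1-c) := by nlinarith
    linarith [h5, h6]
  -- step (iii)
  have hstep3 : d*(c^2*N) - 2*d*c ≤ d*kk^2/N := by
    have h9 : (c*N-1)^2 ≤ kk^2 := by nlinarith
    rw [le_div_iff₀ hN]
    nlinarith [mul_le_mul_of_nonneg_left h9 hd0]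
  -- combine with hd * N
  have hdN' : 0 ≤ 2*(1-c)*Real.log (1-c)*N + 2*c*Real.log c*N + c^2*d*N := by
    nlinarith [mul_nonneg hd hN.le]
  rw [hid]
  nlinarith [hstep1, hstep2, hstep3, hdN']

noncomputable def KK (c d : ℝ) : ℝ :=
  (Real.exp 1/(2*π))^2 * Real.exp (4 - 2*Real.log (1-c) + 2*d*c) * (2/(c*(1-c)))

set_option maxHeartbeats 1000000 in
lemma r_le {c d : ℝ} (hc : 0 < c) (hc1 : c < 1)
    (hd : 2 * (1 - c) * Real.log (1 - c) + 2 * c * Real.log c + c ^ 2 * d ≥ 0)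
    (hd0 : 0 ≤ d) :
    ∀ᶠ N : ℕ in atTop,
      ((N.choose ⌊c*(N:ℝ)⌋₊ : ℝ))^2 * (1 - d/N)^(⌊c*(N:ℝ)⌋₊*⌊c*(N:ℝ)⌋₊) ≤ KK c d / N := by
  have h1 : ∀ᶠ N : ℕ in atTop, (2:ℝ)/c ≤ N := tendsto_natCast_atTop_atTop.eventually_ge_atTop _
  have h2 : ∀ᶠ N : ℕ in atTop, 2*d ≤ N := tendsto_natCast_atTop_atTop.eventually_ge_atTop _
  filter_upwards [h1, h2, eventually_ge_atTop 1] with N hN1 hN2 hN3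
  have hN0 : (0:ℝ) < N := by exact_mod_cast hN3
  have hcN : 2 ≤ c*(N:ℝ) := by rw [div_le_iff₀ hc] at hN1; linarith
  set k := ⌊c*(N:ℝ)⌋₊ with hkdef
  have hkle : (k:ℝ) ≤ c*N := Nat.floor_le (by positivity)
  have hkgt : c*N - 1 ≤ (k:ℝ) := (Nat.sub_one_lt_floor _).le
  have hk1 : 1 ≤ k := by
    have : (1:ℝ) ≤ (k:ℝ) := by linarith
    exact_mod_cast this
  have hkN : k < N := by
    have : (k:ℝ) < N := by nlinarith
    exact_mod_cast this
  set s := N - k with hsdef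
  have hs1 : 1 ≤ s := by omega
  have hks : k + s = N := by omega
  have hscast : (s:ℝ) = (N:ℝ) - k := by
    rw [hsdef, Nat.cast_sub hkN.le]
  have hdN2 : d/(N:ℝ) ≤ 1/2 := by rw [div_le_div_iff₀ hN0 (by norm_num)]; linarith
  have hdN0 : 0 ≤ d/(N:ℝ) := div_nonneg hd0 hN0.le
  have h1d : 0 ≤ 1 - d/(N:ℝ) := by linarith
  have hk0 : (0:ℝ) < k := by exact_mod_cast hk1
  have hs0 : (0:ℝ) < s := by exact_mod_cast hs1
  -- main chain
  have hπ := Real.pi_pos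
  have hexp1 : 1 - d/(N:ℝ) ≤ Real.exp (-(d/N)) := by
    have := Real.add_one_le_exp (-(d/(N:ℝ))); linarith
  have hcc : (N.choose k : ℝ) = ((k+s).choose k : ℝ) := by rw [hks]
  have step1 : ((N.choose k : ℝ))^2 * (1 - d/N)^(k*k) ≤
      ((Real.exp 1 / (2*π)) * (Real.sqrt ((k:ℝ)+(s:ℝ)) / (Real.sqrt k * Real.sqrt s))
        * Real.exp (((k:ℝ)+(s:ℝ)) * Real.log ((k:ℝ)+(s:ℝ)) - k * Real.log k - s * Real.log s))^2
      * (Real.exp (-(d/N)))^(k*k) := by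
    rw [hcc]
    apply mul_le_mul (pow_le_pow_left₀ (by positivity) (choose_le hk1 hs1) 2)
      (pow_le_pow_left₀ h1d hexp1 _) (pow_nonneg h1d _) (by positivity)
  refine step1.trans ?_
  have hent : 2*(((k:ℝ)+s) * Real.log ((k:ℝ)+s) - k * Real.log k - s * Real.log s)
      - ((k*k : ℕ):ℝ)*(d/N) ≤ 4 - 2*Real.log (1-c) + 2*d*c := by
    have e1 : ((k*k : ℕ):ℝ)*(d/N) = d*(k:ℝ)^2/(N:ℝ) := by push_cast; ring
    have e2 : (k:ℝ) + s = N := by rw [hscast]; ring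
    rw [e1, e2]
    exact entropy_bound hc hc1 hd hd0 hN0 hkgt hkle (by rw [hscast]; ring) hcN
  have hsq : (Real.sqrt ((k:ℝ)+(s:ℝ)) / (Real.sqrt k * Real.sqrt s))^2
      = ((k:ℝ)+s)/((k:ℝ)*s) := by
    rw [div_pow, mul_pow, Real.sq_sqrt (by positivity), Real.sq_sqrt hk0.le,
      Real.sq_sqrt hs0.le]
  have hexp2 : Real.exp (((k:ℝ)+(s:ℝ)) * Real.log ((k:ℝ)+(s:ℝ)) - k * Real.log k
        - s * Real.log s)^2 * (Real.exp (-(d/N)))^(k*k)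
      = Real.exp (2*(((k:ℝ)+s) * Real.log ((k:ℝ)+s) - k * Real.log k - s * Real.log s)
          - ((k*k : ℕ):ℝ)*(d/N)) := by
    rw [← Real.exp_nat_mul, ← Real.exp_nat_mul, ← Real.exp_add]
    congr 1
    push_cast
    ring
  have hrw : ((Real.exp 1 / (2*π)) * (Real.sqrt ((k:ℝ)+(s:ℝ)) / (Real.sqrt k * Real.sqrt s))
        * Real.exp (((k:ℝ)+(s:ℝ)) * Real.log ((k:ℝ)+(s:ℝ)) - k * Real.log k - s * Real.log s))^2
      * (Real.exp (-(d/N)))^(k*k)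
      = (Real.exp 1/(2*π))^2 * (((k:ℝ)+s)/((k:ℝ)*s)) *
        Real.exp (2*(((k:ℝ)+s) * Real.log ((k:ℝ)+s) - k * Real.log k - s * Real.log s)
          - ((k*k : ℕ):ℝ)*(d/N)) := by
    rw [← hexp2, ← hsq]; ring
  rw [hrw]
  have hfrac : ((k:ℝ)+s)/((k:ℝ)*s) ≤ (2/(c*(1-c)))/(N:ℝ) := by
    have hklb : c*(N:ℝ)/2 ≤ k := by linarith
    have hslb : (1-c)*(N:ℝ) ≤ s := by rw [hscast]; nlinarith
    have hkspos : (0:ℝ) < (k:ℝ)*s := by positivity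
    have e2 : (k:ℝ) + s = N := by rw [hscast]; ring
    rw [e2, div_le_div_iff₀ hkspos hN0]
    have h10 : c*(N:ℝ)/2 * ((1-c)*N) ≤ (k:ℝ)*s :=
      mul_le_mul hklb hslb (mul_nonneg (by linarith) hN0.le) hk0.le
    rw [div_mul_eq_mul_div, le_div_iff₀ (by nlinarith : (0:ℝ) < c*(1-c))]
    nlinarith
  have hlast : (Real.exp 1/(2*π))^2 * (((k:ℝ)+s)/((k:ℝ)*s)) *
        Real.exp (2*(((k:ℝ)+s) * Real.log ((k:ℝ)+s) - k * Real.log k - s * Real.log s)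
          - ((k*k : ℕ):ℝ)*(d/N))
      ≤ (Real.exp 1/(2*π))^2 * ((2/(c*(1-c)))/(N:ℝ)) *
        Real.exp (4 - 2*Real.log (1-c) + 2*d*c) := by
    have hcc1 : (0:ℝ) < c*(1-c) := mul_pos hc (by linarith)
    apply mul_le_mul (mul_le_mul_of_nonneg_left hfrac (by positivity))
      (Real.exp_le_exp.2 hent) (Real.exp_pos _).le
      (mul_nonneg (by positivity) (div_nonneg (div_nonneg (by norm_num) hcc1.le) hN0.le))
  refine hlast.trans (le_of_eq ?_)
  simp only [KK]
  ring

instance (N : ℕ) (p : ℝ) : IsProbabilityMeasure (randomBipartite N p) := by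
  rw [randomBipartite]; infer_instance

lemma measure_noEdge (N : ℕ) (p : ℝ) (S T : Finset (Fin N)) :
    randomBipartite N p {f | ∀ s ∈ S, ∀ t ∈ T, f (s, t) = false}
      = (1 - ((min (Real.toNNReal p) 1 : NNReal) : ENNReal)) ^ (S.card * T.card) := by
  have hset : {f : Fin N × Fin N → Bool | ∀ s ∈ S, ∀ t ∈ T, f (s, t) = false}
      = Set.univ.pi (fun i => if i ∈ S ×ˢ T then ({false} : Set Bool) else Set.univ) := by
    ext f
    simp only [Set.mem_setOf_eq, Set.mem_pi, Set.mem_univ, forall_true_left]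
    constructor
    · intro h i
      by_cases hi : i ∈ S ×ˢ T
      · simp only [hi, if_true, Set.mem_singleton_iff]
        rw [Finset.mem_product] at hi
        exact h i.1 hi.1 i.2 hi.2
      · simp [hi]
    · intro h s hs t ht
      have := h (s, t)
      rw [if_pos (Finset.mem_product.2 ⟨hs, ht⟩)] at this
      exact this
  rw [hset, randomBipartite, Measure.pi_pi]
  have hb : ∀ i : Fin N × Fin N,
      (PMF.bernoulli (min (Real.toNNReal p) 1) (min_le_right _ _)).toMeasure
        (if i ∈ S ×ˢ T then ({false} : Set Bool) else Set.univ)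
      = if i ∈ S ×ˢ T then 1 - ((min (Real.toNNReal p) 1 : NNReal) : ENNReal) else 1 := by
    intro i
    by_cases hi : i ∈ S ×ˢ T
    · rw [if_pos hi, if_pos hi, PMF.toMeasure_apply_singleton _ _ (measurableSet_singleton _),
        PMF.bernoulli_apply]
      rfl
    · rw [if_neg hi, if_neg hi, measure_univ]
  simp only [hb]
  rw [Finset.prod_ite_mem, Finset.univ_inter, Finset.prod_const, Finset.card_product]

lemma measure_good_ge (N : ℕ) (p : ℝ) (k : ℕ) :
    1 - (N.choose k : ENNReal)^2 * (1 - ((min (Real.toNNReal p) 1 : NNReal) : ENNReal)) ^ (k*k)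
      ≤ randomBipartite N p
        {f | ∀ S T : Finset (Fin N), S.card = k → T.card = k →
          ∃ s ∈ S, ∃ t ∈ T, f (s, t) = true} := by
  set μ := randomBipartite N p
  set G := {f : Fin N × Fin N → Bool | ∀ S T : Finset (Fin N), S.card = k → T.card = k →
          ∃ s ∈ S, ∃ t ∈ T, f (s, t) = true}
  have hGc : μ Gᶜ ≤ (N.choose k : ENNReal)^2 * (1 - ((min (Real.toNNReal p) 1 : NNReal) : ENNReal)) ^ (k*k) := by
    have hsub : Gᶜ ⊆ ⋃ S ∈ Finset.powersetCard k (Finset.univ : Finset (Fin N)),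
        ⋃ T ∈ Finset.powersetCard k (Finset.univ : Finset (Fin N)),
          {f : Fin N × Fin N → Bool | ∀ s ∈ S, ∀ t ∈ T, f (s, t) = false} := by
      intro f hf
      simp only [G, Set.mem_compl_iff, Set.mem_setOf_eq, not_forall] at hf
      obtain ⟨S, T, hS, hT, hno⟩ := hf
      simp only [Set.mem_iUnion]
      refine ⟨S, Finset.mem_powersetCard.2 ⟨Finset.subset_univ _, hS⟩,
        T, Finset.mem_powersetCard.2 ⟨Finset.subset_univ _, hT⟩, ?_⟩
      simp only [Set.mem_setOf_eq]
      intro s hs t ht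
      by_contra hft
      exact hno ⟨s, hs, t, ht, by simpa using hft⟩
    calc μ Gᶜ ≤ ∑ S ∈ Finset.powersetCard k (Finset.univ : Finset (Fin N)),
          μ (⋃ T ∈ Finset.powersetCard k (Finset.univ : Finset (Fin N)),
            {f : Fin N × Fin N → Bool | ∀ s ∈ S, ∀ t ∈ T, f (s, t) = false}) :=
          le_trans (measure_mono hsub) (measure_biUnion_finset_le _ _)
      _ ≤ ∑ S ∈ Finset.powersetCard k (Finset.univ : Finset (Fin N)),
          ∑ T ∈ Finset.powersetCard k (Finset.univ : Finset (Fin N)),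
            μ {f : Fin N × Fin N → Bool | ∀ s ∈ S, ∀ t ∈ T, f (s, t) = false} :=
          Finset.sum_le_sum fun S _ => measure_biUnion_finset_le _ _
      _ = (N.choose k : ENNReal)^2 * (1 - ((min (Real.toNNReal p) 1 : NNReal) : ENNReal)) ^ (k*k) := by
          have : ∀ S ∈ Finset.powersetCard k (Finset.univ : Finset (Fin N)),
              ∀ T ∈ Finset.powersetCard k (Finset.univ : Finset (Fin N)),
              μ {f : Fin N × Fin N → Bool | ∀ s ∈ S, ∀ t ∈ T, f (s, t) = false}
              = (1 - ((min (Real.toNNReal p) 1 : NNReal) : ENNReal)) ^ (k*k) := by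
            intro S hS T hT
            rw [Finset.mem_powersetCard] at hS hT
            rw [measure_noEdge, hS.2, hT.2]
          rw [Finset.sum_congr rfl (fun S hS => Finset.sum_congr rfl (this S hS))]
          simp [Finset.card_powersetCard, Finset.card_univ, Fintype.card_fin, sq]
          ring
  have hG : MeasurableSet G := G.to_countable.measurableSet
  calc 1 - (N.choose k : ENNReal)^2 * (1 - ((min (Real.toNNReal p) 1 : NNReal) : ENNReal)) ^ (k*k)
      ≤ 1 - μ Gᶜ := tsub_le_tsub_left hGc 1
    _ = μ G := by rw [prob_compl_eq_one_sub hG, ENNReal.sub_sub_cancel ENNReal.one_ne_top prob_le_one]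

lemma d_nonneg {c d : ℝ} (hc : 0 < c) (hc1 : c < 1)
    (hd : 2 * (1 - c) * Real.log (1 - c) + 2 * c * Real.log c + c ^ 2 * d ≥ 0) : 0 ≤ d := by
  have l1 : (1-c)*Real.log (1-c) < 0 :=
    mul_neg_of_pos_of_neg (by linarith) (Real.log_neg (by linarith) (by linarith))
  have l2 : c*Real.log c < 0 := mul_neg_of_pos_of_neg hc (Real.log_neg hc hc1)
  nlinarith [pow_pos hc 2]

end Stmt12Aux

open Stmt12Aux Filter in
theorem stmt_12 (c d : ℝ) (hc : 0 < c) (hc1 : c < 1)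
    (hd : 2 * (1 - c) * Real.log (1 - c) + 2 * c * Real.log c + c ^ 2 * d ≥ 0) :
    Filter.Tendsto
      (fun N : ℕ => randomBipartite N (d / N)
        {f | ∀ S T : Finset (Fin N), S.card = ⌊c * N⌋₊ → T.card = ⌊c * N⌋₊ →
          ∃ s ∈ S, ∃ t ∈ T, f (s, t) = true})
      Filter.atTop (nhds 1) := by
  have hd0 : 0 ≤ d := d_nonneg hc hc1 hd
  -- real tendsto
  have hr : Tendsto (fun N : ℕ =>
      ((N.choose ⌊c*(N:ℝ)⌋₊ : ℝ))^2 * (1 - d/N)^(⌊c*(N:ℝ)⌋₊*⌊c*(N:ℝ)⌋₊)) atTop (nhds 0) := by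
    apply squeeze_zero' ?_ (r_le hc hc1 hd hd0) (tendsto_const_div_atTop_nhds_zero_nat _)
    have h2 : ∀ᶠ N : ℕ in atTop, d ≤ (N:ℝ) := tendsto_natCast_atTop_atTop.eventually_ge_atTop _
    filter_upwards [h2, eventually_ge_atTop 1] with N hdn h1
    have hN0 : (0:ℝ) < N := by exact_mod_cast h1
    have h3 : d/(N:ℝ) ≤ 1 := by rw [div_le_one hN0]; exact hdn
    have h4 : (0:ℝ) ≤ 1 - d/(N:ℝ) := by linarith
    exact mul_nonneg (sq_nonneg _) (pow_nonneg h4 _)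
  set bnd := fun N : ℕ => ((N.choose ⌊c*(N:ℝ)⌋₊ : ℕ) : ENNReal)^2
    * (1 - ((min (Real.toNNReal (d/N)) 1 : NNReal) : ENNReal))^(⌊c*(N:ℝ)⌋₊*⌊c*(N:ℝ)⌋₊) with hbnddef
  have hbnd : Tendsto bnd atTop (nhds 0) := by
    have heq : (fun N : ℕ => ENNReal.ofReal
        (((N.choose ⌊c*(N:ℝ)⌋₊ : ℝ))^2 * (1 - d/N)^(⌊c*(N:ℝ)⌋₊*⌊c*(N:ℝ)⌋₊))) =ᶠ[atTop] bnd := by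
      have h2 : ∀ᶠ N : ℕ in atTop, d ≤ (N:ℝ) := tendsto_natCast_atTop_atTop.eventually_ge_atTop _
      filter_upwards [h2, eventually_ge_atTop 1] with N hdn h1
      have hN0 : (0:ℝ) < N := by exact_mod_cast h1
      have h3 : d/(N:ℝ) ≤ 1 := by rw [div_le_one hN0]; exact hdn
      have h4 : (0:ℝ) ≤ 1 - d/(N:ℝ) := by linarith
      have hdN0 : (0:ℝ) ≤ d/N := div_nonneg hd0 hN0.le
      have hmin : ((min (Real.toNNReal (d/(N:ℝ))) 1 : NNReal) : ENNReal) = ENNReal.ofReal (d/N) := by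
        rw [min_eq_left (Real.toNNReal_le_one.2 h3)]; rfl
      have hsub : (1 : ENNReal) - ENNReal.ofReal (d/(N:ℝ)) = ENNReal.ofReal (1 - d/N) := by
        rw [ENNReal.ofReal_sub 1 hdN0, ENNReal.ofReal_one]
      simp only [hbnddef, hmin, hsub]
      rw [← ENNReal.ofReal_natCast (N.choose ⌊c*(N:ℝ)⌋₊),
        ← ENNReal.ofReal_pow (Nat.cast_nonneg _), ← ENNReal.ofReal_pow h4,
        ← ENNReal.ofReal_mul (by positivity)]
    refine Tendsto.congr' heq ?_
    have := ENNReal.tendsto_ofReal (f := atTop) hr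
    simpa [ENNReal.ofReal_zero] using this
  have hone : Tendsto (fun N : ℕ => 1 - bnd N) atTop (nhds 1) := by
    have := ENNReal.Tendsto.sub (tendsto_const_nhds (x := (1:ENNReal)) (f := atTop)) hbnd
      (Or.inl ENNReal.one_ne_top)
    simpa using this
  apply tendsto_of_tendsto_of_tendsto_of_le_of_le hone
    (tendsto_const_nhds (x := (1:ENNReal)))
  · intro N
    exact measure_good_ge N (d/N) ⌊c*(N:ℝ)⌋₊
  · intro N
    exact prob_le_one
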